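/- Let (Ω, P) be a probability space with events B (membership in group g), and for a hypothesis h and value v define p₁ = P[h=v, y=1 | B], p₂ = P[h=v | B], and empirical counterparts p̃₁, p̃₂ computed from a sample of points in B. If |p̃₁ − p₁| ≤ ψε/3 and |p̃₂ − p₂| ≤ ψε/3 hold for all hypotheses h in a class H, all groups g, and all values v, then for every h, g, v with P[B] ≥ γ and p₂ ≥ ψ, the true and empirical calibration errors satisfy |c(h,g,{v}) − ĉ(h,g,{v},S)| ≤ ε, where c(h,g,{v}) = p₁/p₂ and ĉ(h,g,{v},S) = p̃₁/p̃₂. -/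
import Mathlib


theorem multicalibration_from_pointwise_estimates
    {H G V : Type*}
    (ψ ε γ : ℝ) (hψ : ψ ∈ Set.Ioo (0:ℝ) 1) (hε : ε ∈ Set.Ioo (0:ℝ) 1)
    (hγ : γ ∈ Set.Ioo (0:ℝ) 1)
    (PB : G → ℝ)
    (p₁ p₂ pt₁ pt₂ : H → G → V → ℝ)
    (hp₁ : ∀ h g v, p₁ h g v ∈ Set.Icc (0:ℝ) 1)
    (hp₂ : ∀ h g v, p₂ h g v ∈ Set.Icc (0:ℝ) 1)
    (hpt₁ : ∀ h g v, pt₁ h g v ∈ Set.Icc (0:ℝ) 1)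
    (hpt₂ : ∀ h g v, pt₂ h g v ∈ Set.Icc (0:ℝ) 1)
    (hle : ∀ h g v, p₁ h g v ≤ p₂ h g v)
    (htle : ∀ h g v, pt₁ h g v ≤ pt₂ h g v)
    (hpt₂pos : ∀ h g v, 0 < pt₂ h g v)
    (hest₁ : ∀ h g v, |pt₁ h g v - p₁ h g v| ≤ ψ * ε / 3)
    (hest₂ : ∀ h g v, |pt₂ h g v - p₂ h g v| ≤ ψ * ε / 3) :
    ∀ h g v, γ ≤ PB g → ψ ≤ p₂ h g v →
      |p₁ h g v / p₂ h g v - pt₁ h g v / pt₂ h g v| ≤ ε := by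
  intro h g v _ hb
  obtain ⟨hψ0, hψ1⟩ := hψ
  obtain ⟨hε0, hε1⟩ := hε
  set a := p₁ h g v
  set b := p₂ h g v
  set a' := pt₁ h g v
  set b' := pt₂ h g v
  have ha0 : 0 ≤ a := (hp₁ h g v).1
  have hab : a ≤ b := hle h g v
  have hb0 : 0 < b := lt_of_lt_of_le hψ0 hb
  have hb'0 : 0 < b' := hpt₂pos h g v
  have h1 := abs_le.mp (hest₁ h g v)
  have h2 := abs_le.mp (hest₂ h g v)
  have hb'lb : 2 * ψ / 3 ≤ b' := by nlinarith [h2.1]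
  rw [div_sub_div a a' hb0.ne' hb'0.ne', abs_div, abs_of_pos (mul_pos hb0 hb'0)]
  rw [div_le_iff₀ (mul_pos hb0 hb'0)]
  have key : |a * b' - b * a'| ≤ 2 * b * (ψ * ε / 3) := by
    have : a * b' - b * a' = a * (b' - b) + b * (a - a') := by ring
    rw [this]
    calc |a * (b' - b) + b * (a - a')| ≤ |a * (b' - b)| + |b * (a - a')| := abs_add_le _ _
      _ = a * |b' - b| + b * |a - a'| := by
          rw [abs_mul, abs_mul, abs_of_nonneg ha0, abs_of_pos hb0]
      _ ≤ b * (ψ * ε / 3) + b * (ψ * ε / 3) := by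
          have e1 : |b' - b| ≤ ψ * ε / 3 := hest₂ h g v
          have e2 : |a - a'| ≤ ψ * ε / 3 := by rw [abs_sub_comm]; exact hest₁ h g v
          have : a * |b' - b| ≤ b * (ψ * ε / 3) := by nlinarith [abs_nonneg (b' - b)]
          nlinarith [abs_nonneg (a - a')]
      _ = 2 * b * (ψ * ε / 3) := by ring
  refine key.trans ?_
  nlinarith [mul_nonneg (mul_pos hε0 hb0).le (sub_nonneg.mpr hb'lb)]
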